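/- Let (a, B_a) be a Lie superalgebra over a field of characteristic 2 with an even NIS, D an even derivation of a with B_a(D(a), b) + B_a(a, D(b)) = 0 for all a,b and B_a(D(a), a) = 0 for all even a, and α: a₁ → K a quadratic form whose polar form B_α satisfies B_α(a,b) = B_a(a, D(b)) for odd a,b. Then g := Kx ⊕ a ⊕ Kx* (x even) with bracket [x, g] = 0, [a,b]_g := [a,b]_a + B_a(D(a),b)x, [x*, a]_g := D(a), and squaring s_g(a) := s_a(a) + α(a)x, is a Lie superalgebra, and the bilinear form B_g extending B_a with B_g(x, x*) = 1, B_g(x,x) = 0, B_g(a, x) = B_g(a, x*) = 0 is non-degenerate, even, 0̄-antisymmetric, and invariant. -/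

import Mathlib

/-- the even double extension (`D`-extension with `x` even) of a
NIS-Lie superalgebra `(a, B_a)` in characteristic 2 by an even derivation `D` and a
quadratic form `α` is again a NIS-Lie superalgebra. The extended space is
`K x ⊕ a ⊕ K x*`, modeled as `K × V × K` with `x = (1,0,0)`, `x* = (0,0,1)`. -/
theorem stmt15 {K V : Type*} [Field K] [CharP K 2]
    [AddCommGroup V] [Module K V]
    (g0 g1 : Submodule K V) (hcompl : IsCompl g0 g1)
    (br : V →ₗ[K] V →ₗ[K] V) (sq : V → V)
    -- Lie superalgebra axioms on `a`
    (halt : ∀ u : V, br u u = 0)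
    (hjac : ∀ u v w : V, br u (br v w) + br v (br w u) + br w (br u v) = 0)
    (hbr00 : ∀ x ∈ g0, ∀ y ∈ g0, br x y ∈ g0)
    (hbr01 : ∀ x ∈ g0, ∀ y ∈ g1, br x y ∈ g1)
    (hbr11 : ∀ x ∈ g1, ∀ y ∈ g1, br x y ∈ g0)
    (hsqmem : ∀ x ∈ g1, sq x ∈ g0)
    (hsqsmul : ∀ (c : K), ∀ x ∈ g1, sq (c • x) = (c * c) • sq x)
    (hsqpol : ∀ x ∈ g1, ∀ y ∈ g1, sq (x + y) + sq x + sq y = br x y)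
    (hsqjac : ∀ x ∈ g1, ∀ y : V, br (sq x) y = br x (br x y))
    -- even NIS on `a`
    (B : V →ₗ[K] V →ₗ[K] K)
    (hBnd : ∀ x, (∀ y, B x y = 0) → x = 0)
    (hBinv : ∀ x y z, B (br x y) z = B x (br y z))
    (hBsym : ∀ x y, B x y = B y x)
    (hBalt : ∀ x ∈ g1, B x x = 0)
    (hBeven : ∀ x ∈ g0, ∀ y ∈ g1, B x y = 0)
    -- the even derivation `D`
    (D : V →ₗ[K] V)
    (hD0 : ∀ x ∈ g0, D x ∈ g0) (hD1 : ∀ x ∈ g1, D x ∈ g1)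
    (hDbr : ∀ x y, D (br x y) = br (D x) y + br x (D y))
    (hDsq : ∀ x ∈ g1, D (sq x) = br (D x) x)
    (hDskew : ∀ x y, B (D x) y + B x (D y) = 0)
    (hDalt : ∀ x ∈ g0, B (D x) x = 0)
    -- the quadratic form α with polar form `B_α(x,y) = B(x, D y)`
    (α : V → K)
    (hαsmul : ∀ (c : K), ∀ x ∈ g1, α (c • x) = c * c * α x)
    (hαpol : ∀ x ∈ g1, ∀ y ∈ g1, α (x + y) + α x + α y = B x (D y))
    -- the double extension data on `K × V × K`
    (brG : (K × V × K) → (K × V × K) → (K × V × K))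
    (hbrG : ∀ u v, brG u v =
      (B (D u.2.1) v.2.1, br u.2.1 v.2.1 + u.2.2 • D v.2.1 + v.2.2 • D u.2.1, 0))
    (sG : (K × V × K) → (K × V × K))
    (hsG : ∀ u, sG u = (α u.2.1, sq u.2.1, 0))
    (BG : (K × V × K) → (K × V × K) → K)
    (hBG : ∀ u v, BG u v = B u.2.1 v.2.1 + u.1 * v.2.2 + u.2.2 * v.1)
    (G0 G1 : Set (K × V × K))
    (hG0 : G0 = {u | u.2.1 ∈ g0})
    (hG1 : G1 = {u | u.1 = 0 ∧ u.2.1 ∈ g1 ∧ u.2.2 = 0}) :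
    -- `g` is a Lie superalgebra
    (∀ u, brG u u = 0) ∧
    (∀ u v w, brG u (brG v w) + brG v (brG w u) + brG w (brG u v) = 0) ∧
    (∀ u ∈ G1, sG u ∈ G0) ∧
    (∀ (c : K), ∀ u ∈ G1, sG (c • u) = (c * c) • sG u) ∧
    (∀ u ∈ G1, ∀ v ∈ G1, sG (u + v) + sG u + sG v = brG u v) ∧
    (∀ u ∈ G1, ∀ v, brG (sG u) v = brG u (brG u v)) ∧
    -- `B_g` is a NIS: non-degenerate, invariant, even, 0̄-antisymmetric
    (∀ u, (∀ v, BG u v = 0) → u = 0) ∧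
    (∀ u v w, BG (brG u v) w = BG u (brG v w)) ∧
    (∀ u v, BG u v = BG v u) ∧
    (∀ u ∈ G1, BG u u = 0) ∧
    (∀ u ∈ G0, ∀ v ∈ G1, BG u v = 0) := by
  have htwo : (2 : K) = 0 := by exact_mod_cast CharP.cast_eq_zero K 2
  have hKadd : ∀ x : K, x + x = 0 := fun x => by linear_combination x * htwo
  have hVadd : ∀ x : V, x + x = 0 := fun x => by
    rw [← two_smul K x, htwo, zero_smul]
  have hneg : ∀ x : V, -x = x := fun x => neg_eq_of_add_eq_zero_left (hVadd x)
  have hbrs : ∀ x y : V, br x y = br y x := by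
    intro x y
    have h := halt (x + y)
    simp only [map_add, LinearMap.add_apply, halt, zero_add, add_zero] at h
    have h2 := add_eq_zero_iff_eq_neg.mp h
    rw [hneg] at h2
    exact h2.symm
  have hBD : ∀ x y, B (D x) y = B x (D y) := fun x y => by
    linear_combination hDskew x y - B x (D y) * htwo
  have hα0 : α 0 = 0 := by
    have := hαsmul 0 0 g1.zero_mem
    simpa using this
  have hBDg1 : ∀ x ∈ g1, B x (D x) = 0 := by
    intro x hx
    have hpol := hαpol x hx x hx
    rw [hVadd x, hα0] at hpol
    linear_combination (α x) * htwo - hpol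
  have hBDself : ∀ x, B (D x) x = 0 := by
    intro x
    obtain ⟨x0, x1, hx0, hx1, rfl⟩ := Submodule.codisjoint_iff_exists_add_eq.mp hcompl.codisjoint x
    simp only [map_add, LinearMap.add_apply]
    have h1 := hDalt x0 hx0
    have h2 := hBeven (D x0) (hD0 x0 hx0) x1 hx1
    have h3 : B (D x1) x0 = 0 := by rw [hBsym]; exact hBeven x0 hx0 (D x1) (hD1 x1 hx1)
    have h4 : B (D x1) x1 = 0 := by rw [hBsym]; exact hBDg1 x1 hx1
    rw [h1, h2, h3, h4]; ring
  have hS : ∀ a b c : V, B (D a) (br b c) + B (D b) (br c a) + B (D c) (br a b) = 0 := by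
    intro a b c
    have h1 : B (D c) (br a b) = B (D a) (br b c) + B a (br (D b) c) := by
      have hthis := hBD (br a b) c
      rw [hDbr] at hthis
      simp only [map_add, LinearMap.add_apply] at hthis
      have e1 := hBinv (D a) b c
      have e2 := hBinv a (D b) c
      have e3 := hBsym (D c) (br a b)
      linear_combination e1 + e2 + e3 - hthis
    have h2 : B (D b) (br c a) = B a (br (D b) c) := by
      have e1 := hBinv (D b) c a
      have e2 := hBsym (br (D b) c) a
      linear_combination e2 - e1
    linear_combination h1 + h2 + (B (D a) (br b c) + B a (br (D b) c)) * htwo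
  refine ⟨?_, ?_, ?_, ?_, ?_, ?_, ?_, ?_, ?_, ?_, ?_⟩
  · -- alternating
    intro u
    rw [hbrG]
    refine Prod.ext (hBDself u.2.1) (Prod.ext ?_ rfl)
    show br u.2.1 u.2.1 + u.2.2 • D u.2.1 + u.2.2 • D u.2.1 = 0
    rw [halt, zero_add]
    exact hVadd _
  · -- Jacobi
    intro u v w
    obtain ⟨p, a, q⟩ := u
    obtain ⟨r, b, s⟩ := v
    obtain ⟨t, c, e⟩ := w
    simp only [hbrG, hDbr, map_add, map_smul, LinearMap.add_apply, LinearMap.smul_apply,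
      smul_eq_mul, Prod.mk_add_mk, Prod.mk_eq_zero]
    refine ⟨?_, ?_, by ring⟩
    · linear_combination hS a b c + s * hBsym (D a) (D c) + q * hBsym (D b) (D c) +
        e * hBsym (D a) (D b) +
        (s * B (D c) (D a) + q * B (D c) (D b) + e * B (D b) (D a)) * htwo
    · refine hBnd _ fun y => ?_
      simp only [map_add, map_smul, LinearMap.add_apply, LinearMap.smul_apply,
        LinearMap.map_smul₂, smul_eq_mul]
      have Hj : B (br a (br b c)) y + B (br b (br c a)) y + B (br c (br a b)) y = 0 := by
        have h := hjac a b c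
        have h2 := congrArg (fun t => B t y) h
        simpa only [map_add, LinearMap.add_apply, map_zero, LinearMap.zero_apply] using h2
      have H1 : B (br a (D c)) y = B (br (D c) a) y := by rw [hbrs a (D c)]
      have H2 : B (br b (D a)) y = B (br (D a) b) y := by rw [hbrs b (D a)]
      have H3 : B (br (D b) c) y = B (br c (D b)) y := by rw [hbrs (D b) c]
      linear_combination Hj + s * H1 + e * H2 + q * H3 +
        (s * B (br (D c) a) y + s * B (br c (D a)) y + e * B (br a (D b)) y +
          e * B (br (D a) b) y + q * B (br c (D b)) y + q * B (br b (D c)) y +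
          q * s * B (D (D c)) y + q * e * B (D (D b)) y + s * e * B (D (D a)) y) * htwo
  · -- squaring lands in even part
    intro u hu
    rw [hG1] at hu
    rw [hG0, hsG]
    exact hsqmem u.2.1 hu.2.1
  · -- squaring is quadratic
    intro cc u hu
    obtain ⟨p, a, q⟩ := u
    rw [hG1] at hu
    obtain ⟨h1, h2, h3⟩ := hu
    simp only at h1 h2 h3
    subst h1 h3
    simp only [hsG, Prod.smul_mk, smul_zero, Prod.mk.injEq, smul_eq_mul]
    exact ⟨hαsmul cc a h2, hsqsmul cc a h2, by ring⟩
  · -- polarization of squaring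
    intro u hu v hv
    obtain ⟨p, a, q⟩ := u
    obtain ⟨r, b, s⟩ := v
    rw [hG1] at hu hv
    obtain ⟨h1, h2, h3⟩ := hu
    obtain ⟨h4, h5, h6⟩ := hv
    simp only at h1 h2 h3 h4 h5 h6
    subst h1 h3 h4 h6
    simp only [hsG, hbrG, Prod.mk_add_mk, add_zero, zero_smul, smul_zero, zero_add,
      Prod.mk.injEq]
    exact ⟨by rw [hαpol a h2 b h5, hBD], hsqpol a h2 b h5, trivial⟩
  · -- squaring Jacobi
    intro u hu v
    obtain ⟨p, a, q⟩ := u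
    rw [hG1] at hu
    obtain ⟨h1, h2, h3⟩ := hu
    simp only at h1 h2 h3
    subst h1 h3
    simp only [hsG, hbrG, zero_smul, add_zero, zero_add, Prod.mk.injEq, smul_eq_mul,
      map_add, map_smul, LinearMap.add_apply, LinearMap.smul_apply]
    refine ⟨?_, ?_, trivial⟩
    · rw [hDsq a h2]
      linear_combination hBinv (D a) a v.2.1 + v.2.2 * hBalt (D a) (hD1 a h2) - v.2.2 * B (D a) (D a) * htwo
    · rw [hsqjac a h2, hDsq a h2, hbrs (D a) a]
      try abel
  · -- nondegeneracy
    intro u hu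
    obtain ⟨p, a, q⟩ := u
    have h1 := hu (0, 0, 1)
    have h2 := hu (1, 0, 0)
    simp only [hBG, map_zero, LinearMap.zero_apply, LinearMap.map_zero, mul_one, mul_zero,
      one_mul, zero_add, add_zero, zero_mul] at h1 h2
    have h3 : a = 0 := by
      refine hBnd a fun y => ?_
      have := hu (0, y, 0)
      simpa [hBG] using this
    simp only [Prod.mk_eq_zero]
    exact ⟨h1, h3, h2⟩
  · -- invariance
    intro u v w
    obtain ⟨p, a, q⟩ := u
    obtain ⟨r, b, s⟩ := v
    obtain ⟨t, c, e⟩ := w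
    simp only [hbrG, hBG, map_add, map_smul, LinearMap.add_apply, LinearMap.smul_apply,
      smul_eq_mul]
    linear_combination hBinv a b c + s * hBD a c + e * hBD a b
  · -- symmetry
    intro u v
    simp only [hBG]
    linear_combination hBsym u.2.1 v.2.1
  · -- antisymmetry on odd part
    intro u hu
    rw [hG1] at hu
    obtain ⟨h1, h2, h3⟩ := hu
    rw [hBG, h1, h3, hBalt u.2.1 h2]
    ring
  · -- evenness
    intro u hu v hv
    rw [hG0] at hu
    rw [hG1] at hv
    rw [hBG, hv.1, hv.2.2, hBeven u.2.1 hu v.2.1 hv.2.1]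
    ring
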